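/- Let G₁ = (Ĥ₁, L̂₁) and G₂ = (Ĥ₂, L̂₂) be linear quantum subsystems on modes ξ̂₁, ξ̂₂ with Ĥ_j = 0 and coupling matrices C₁ = [[cosh α, i cosh α],[−sinh α, i sinh α]], C₂ = [[−sinh α, i sinh α],[cosh α, i cosh α]] (so L̂_j = C_j ξ̂_j). Then the cascade G = G₂ ◁ G₁ has total coupling matrix C = [C₁, C₂]·𝒫₂ᵀ satisfying, after the permutation to (q₁,q₂,p₁,p₂) ordering, C = i Y^{-1/2}[−Z, I₂] where X = 0, Y = [[cosh 2α, −sinh 2α],[−sinh 2α, cosh 2α]], Z = X + iY. -/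

import Mathlib

open Matrix

lemma sq_root_posdef (α : ℝ) :
    (!![Real.cosh α, -Real.sinh α; -Real.sinh α, Real.cosh α] : Matrix (Fin 2) (Fin 2) ℝ).PosDef := by
  refine Matrix.PosDef.of_dotProduct_mulVec_pos ?_ ?_
  · ext i j; fin_cases i <;> fin_cases j <;> simp [Matrix.IsHermitian]
  · intro x hx
    have h1 : 0 < Real.cosh α - Real.sinh α := by
      rw [Real.cosh_sub_sinh]; exact Real.exp_pos _
    have h2 : 0 < Real.cosh α + Real.sinh α := by
      rw [Real.cosh_add_sinh]; exact Real.exp_pos _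
    have hval : dotProduct (star x) (!![Real.cosh α, -Real.sinh α; -Real.sinh α, Real.cosh α] *ᵥ x)
        = (Real.cosh α - Real.sinh α) * (x 0 + x 1)^2 / 2
          + (Real.cosh α + Real.sinh α) * (x 0 - x 1)^2 / 2 := by
      simp [dotProduct, Matrix.mulVec, Fin.sum_univ_two, Real.cosh_eq, Real.sinh_eq]
      ring
    rw [hval]
    rcases (by
      by_contra h
      push_neg at h
      apply hx
      ext i
      fin_cases i <;> simp <;> nlinarith [h.1, h.2] : (x 0 + x 1) ≠ 0 ∨ (x 0 - x 1) ≠ 0) with h | h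
    · have := sq_pos_of_ne_zero h
      positivity
    · have := sq_pos_of_ne_zero h
      positivity

set_option maxHeartbeats 1000000

/-- the cascade coupling matrix [C₁, C₂]𝒫₂ᵀ equals
    i Y^{-1/2}[−Z, I₂] for the two-mode squeezed state (X = 0,
    Y = [[cosh 2α, −sinh 2α],[−sinh 2α, cosh 2α]], Z = X + iY). -/
theorem stmt13 (α : ℝ)
    (C₁ C₂ : Matrix (Fin 2) (Fin 2) ℂ)
    (hC₁ : C₁ = !![(Real.cosh α : ℂ), Complex.I * (Real.cosh α : ℂ);
                   (-Real.sinh α : ℂ), Complex.I * (Real.sinh α : ℂ)])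
    (hC₂ : C₂ = !![(-Real.sinh α : ℂ), Complex.I * (Real.sinh α : ℂ);
                   (Real.cosh α : ℂ), Complex.I * (Real.cosh α : ℂ)])
    (A : Matrix (Fin 2) (Fin 4) ℂ)
    (hA : A = !![C₁ 0 0, C₁ 0 1, C₂ 0 0, C₂ 0 1;
                 C₁ 1 0, C₁ 1 1, C₂ 1 0, C₂ 1 1])
    (P₂ : Matrix (Fin 4) (Fin 4) ℂ)
    (hP₂ : P₂ = !![1,0,0,0; 0,0,1,0; 0,1,0,0; 0,0,0,1])
    (Y Ysq : Matrix (Fin 2) (Fin 2) ℝ)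
    (hYdef : Y = !![Real.cosh (2*α), -Real.sinh (2*α);
                    -Real.sinh (2*α), Real.cosh (2*α)])
    (hYsqPD : Ysq.PosDef) (hYsqSym : Ysq.IsSymm) (hYsq : Ysq * Ysq = Y)
    (Z : Matrix (Fin 2) (Fin 2) ℂ)
    (hZ : Z = Complex.I • Y.map (fun a => (a : ℂ)))
    (B : Matrix (Fin 2) (Fin 4) ℂ)
    (hB : B = !![-Z 0 0, -Z 0 1, 1, 0;
                 -Z 1 0, -Z 1 1, 0, 1]) :
    A * P₂ᵀ = Complex.I • ((Ysq⁻¹).map (fun a => (a : ℂ)) * B) := by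
  -- identify Ysq as the explicit positive square root
  have hSpd := sq_root_posdef α
  have hYsqEq : Ysq = !![Real.cosh α, -Real.sinh α; -Real.sinh α, Real.cosh α] := by
    open scoped MatrixOrder Matrix.Norms.L2Operator in
    apply (CFC.sq_eq_sq_iff _ _ hYsqPD.posSemidef.nonneg hSpd.posSemidef.nonneg).mp
    rw [pow_two, pow_two, hYsq, hYdef]
    ext i j
    fin_cases i <;> fin_cases j <;>
      simp [Matrix.mul_apply, Fin.sum_univ_two, Real.cosh_two_mul, Real.sinh_two_mul,
        Real.cosh_sq] <;> nlinarith [Real.cosh_sq_sub_sinh_sq α]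
  have hinv : Ysq⁻¹ = !![Real.cosh α, Real.sinh α; Real.sinh α, Real.cosh α] := by
    rw [hYsqEq]
    rw [Matrix.inv_def]
    ext i j
    fin_cases i <;> fin_cases j <;>
      simp [Matrix.adjugate_fin_two, Matrix.det_fin_two,
        Ring.inverse_eq_inv'] <;> ring_nf <;>
      rw [Real.cosh_sq_sub_sinh_sq] <;> simp
  -- the common explicit value
  have hL : A * P₂ᵀ =
      !![(Real.cosh α : ℂ), (-Real.sinh α : ℂ), Complex.I * (Real.cosh α : ℂ), Complex.I * (Real.sinh α : ℂ);
         (-Real.sinh α : ℂ), (Real.cosh α : ℂ), Complex.I * (Real.sinh α : ℂ), Complex.I * (Real.cosh α : ℂ)] := by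
    have hPT : P₂ᵀ = !![1,0,0,0; 0,0,1,0; 0,1,0,0; 0,0,0,1] := by
      rw [hP₂]; ext i j; fin_cases i <;> fin_cases j <;> rfl
    subst hC₁ hC₂ hA
    rw [hPT]
    ext i j
    fin_cases i <;> fin_cases j <;>
      simp [Matrix.mul_apply, Fin.sum_univ_four, Matrix.vecHead, Matrix.vecTail]
  have hR : Complex.I • ((Ysq⁻¹).map (fun a => (a : ℂ)) * B) =
      !![(Real.cosh α : ℂ), (-Real.sinh α : ℂ), Complex.I * (Real.cosh α : ℂ), Complex.I * (Real.sinh α : ℂ);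
         (-Real.sinh α : ℂ), (Real.cosh α : ℂ), Complex.I * (Real.sinh α : ℂ), Complex.I * (Real.cosh α : ℂ)] := by
    have hI := Complex.I_mul_I
    have e1 : Complex.cosh (α:ℂ) * Complex.cosh (2*(α:ℂ)) - Complex.sinh (α:ℂ) * Complex.sinh (2*(α:ℂ))
        = Complex.cosh (α:ℂ) := by
      rw [Complex.cosh_two_mul, Complex.sinh_two_mul]
      linear_combination (Complex.cosh (α:ℂ)) * (Complex.cosh_sq_sub_sinh_sq α)
    have e2 : Complex.cosh (α:ℂ) * Complex.sinh (2*(α:ℂ)) - Complex.sinh (α:ℂ) * Complex.cosh (2*(α:ℂ))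
        = Complex.sinh (α:ℂ) := by
      rw [Complex.cosh_two_mul, Complex.sinh_two_mul]
      linear_combination (Complex.sinh (α:ℂ)) * (Complex.cosh_sq_sub_sinh_sq α)
    subst hZ hYdef hB
    rw [hinv]
    ext i j
    fin_cases i <;> fin_cases j <;>
      simp [Matrix.mul_apply, Fin.sum_univ_two]
    all_goals
      first
        | linear_combination (Complex.sinh (α:ℂ) * Complex.sinh (2*(α:ℂ))
            - Complex.cosh (α:ℂ) * Complex.cosh (2*(α:ℂ))) * hI + e1
        | linear_combination (Complex.cosh (α:ℂ) * Complex.sinh (2*(α:ℂ))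
            - Complex.sinh (α:ℂ) * Complex.cosh (2*(α:ℂ))) * hI - e2
  rw [hL, hR]
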